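/- Let α ∈ (0,2) and p > 0, and set d = 1. There exists a constant c = c(p,α) > 0 such that for every x ≥ 1, the principal-value limit Δ̂_1^{α/2} w_p(x) := lim_{ε→0+} ∫_{{y ∈ ℝ : ε < |y−x| < 1}} (w_p(y) − w_p(x)) · 𝒜(1,α) · |x−y|^{−1−α} dy exists and satisfies |Δ̂_1^{α/2} w_p(x)| ≤ c · x^{p−2}. -/

import Mathlib

open MeasureTheory Filter Set Real

/-- The constant `𝒜(d,α) = α·2^{α−1}·π^{−d/2}·Γ((d+α)/2)/Γ(1−α/2)`. -/
noncomputable def frakA (d : ℕ) (α : ℝ) : ℝ :=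
  α * (2 : ℝ) ^ (α - 1) * Real.pi ^ (-(d : ℝ) / 2) *
    Real.Gamma (((d : ℝ) + α) / 2) / Real.Gamma (1 - α / 2)

/-- The function `w_p(x) = (max(x_1,0))^p` on `ℝ^d`. -/
noncomputable def wp (d : ℕ) (hd : 0 < d) (p : ℝ) (x : EuclideanSpace ℝ (Fin d)) : ℝ :=
  max (x ⟨0, hd⟩) 0 ^ p

/-- `truncFracLapPV d α lam u x L` says that the principal-value limit defining the
`lam`-truncated fractional Laplacian `Δ̂_{d,lam}^{α/2} u(x)` exists and equals `L`. -/
def truncFracLapPV (d : ℕ) (α lam : ℝ) (u : EuclideanSpace ℝ (Fin d) → ℝ)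
    (x : EuclideanSpace ℝ (Fin d)) (L : ℝ) : Prop :=
  Tendsto (fun ε : ℝ =>
      ∫ y in {y : EuclideanSpace ℝ (Fin d) | ε < ‖y - x‖ ∧ ‖y - x‖ < lam},
        (u y - u x) * frakA d α * ‖x - y‖ ^ (-((d : ℝ) + α)))
    (nhdsWithin 0 (Set.Ioi 0)) (nhds L)


noncomputable def Cst (p : ℝ) : ℝ :=
  2 * p * |p - 1| * (4 + (2:ℝ) ^ p) + 16 * ((3:ℝ) ^ p + 3 * (2:ℝ) ^ p)

lemma Cst_pos {p : ℝ} (hp : 0 < p) : 0 < Cst p := by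
  unfold Cst
  have h1 : (0:ℝ) ≤ 2 * p * |p - 1| * (4 + (2:ℝ) ^ p) := by positivity
  have h2 : (0:ℝ) < 16 * ((3:ℝ) ^ p + 3 * (2:ℝ) ^ p) := by positivity
  linarith

-- s^(p-2) ≤ (4+2^p) x^(p-2) for x/2 ≤ s ≤ 2x, 1 ≤ x
lemma pow_sub_two_bound {p x s : ℝ} (hp : 0 < p) (hx : 1 ≤ x)
    (hs1 : x / 2 ≤ s) (hs2 : s ≤ 2 * x) :
    s ^ (p - 2) ≤ (4 + (2:ℝ) ^ p) * x ^ (p - 2) := by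
  have hx0 : (0:ℝ) < x := by linarith
  have hs0 : (0:ℝ) < s := by linarith
  rcases le_or_gt p 2 with hc | hc
  · have h1 : s ^ (p - 2) ≤ (x / 2) ^ (p - 2) :=
      Real.rpow_le_rpow_of_nonpos (by linarith) hs1 (by linarith)
    have h2 : (x / 2) ^ (p - 2) = x ^ (p - 2) / (2:ℝ) ^ (p - 2) :=
      Real.div_rpow hx0.le (by norm_num : (0:ℝ) ≤ 2) _
    have h3 : (1/4 : ℝ) ≤ (2:ℝ) ^ (p - 2) := by
      have h := Real.rpow_le_rpow_of_exponent_le one_le_two (by linarith : (-2:ℝ) ≤ p - 2)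
      rwa [show (2:ℝ) ^ (-2:ℝ) = 1/4 from by
        rw [show (-2:ℝ) = ((-2 : ℤ) : ℝ) by norm_num, Real.rpow_intCast]; norm_num] at h
    have hxp : 0 < x ^ (p - 2) := Real.rpow_pos_of_pos hx0 _
    have h2p : (0:ℝ) < (2:ℝ) ^ (p-2) := Real.rpow_pos_of_pos two_pos _
    have : x ^ (p - 2) / (2:ℝ) ^ (p - 2) ≤ x ^ (p - 2) / (1/4) := by
      exact div_le_div_of_nonneg_left hxp.le (by norm_num) h3
    calc s ^ (p-2) ≤ x ^ (p - 2) / (2:ℝ) ^ (p - 2) := by rw [← h2]; exact h1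
      _ ≤ x ^ (p-2) / (1/4) := this
      _ = 4 * x ^ (p-2) := by ring
      _ ≤ (4 + (2:ℝ)^p) * x ^ (p-2) := by
          have : (0:ℝ) < (2:ℝ)^p := Real.rpow_pos_of_pos two_pos _
          nlinarith
  · have h1 : s ^ (p - 2) ≤ (2 * x) ^ (p - 2) :=
      Real.rpow_le_rpow hs0.le hs2 (by linarith)
    have h2 : (2 * x) ^ (p - 2) = (2:ℝ) ^ (p - 2) * x ^ (p - 2) :=
      Real.mul_rpow (by norm_num) hx0.le
    have h3 : (2:ℝ) ^ (p - 2) ≤ (2:ℝ) ^ p :=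
      Real.rpow_le_rpow_of_exponent_le one_le_two (by linarith)
    have hxp : 0 < x ^ (p - 2) := Real.rpow_pos_of_pos hx0 _
    calc s ^ (p-2) ≤ (2:ℝ) ^ (p - 2) * x ^ (p - 2) := h2 ▸ h1
      _ ≤ (2:ℝ) ^ p * x ^ (p-2) := by nlinarith
      _ ≤ (4 + (2:ℝ)^p) * x ^ (p-2) := by nlinarith

lemma Dbound {α p x h : ℝ} (hp : 0 < p) (hα1 : 0 < α) (hα2 : α < 2)
    (hx : 1 ≤ x) (h0 : 0 < h) (h1 : h ≤ 1) :
    |(x+h)^p + (x-h)^p - 2*x^p| ≤ Cst p * x ^ (p-2) * h ^ (1+α/2) := by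
  have hx0 : (0:ℝ) < x := by linarith
  have hxp : (0:ℝ) < x ^ (p-2) := Real.rpow_pos_of_pos hx0 _
  have hhp : (0:ℝ) < h ^ (1+α/2) := Real.rpow_pos_of_pos h0 _
  rcases le_or_gt h (x/2) with hc | hc
  · -- smooth regime
    have hxh : (0:ℝ) < x - h := by linarith
    set KA := |p-1| * ((4 + (2:ℝ)^p) * x ^ (p-2)) with hKA
    have hKA0 : 0 ≤ KA := by positivity
    have derivBound : ∀ t : ℝ, 0 ≤ t → t ≤ h →
        |(x+t) ^ (p-1) - (x-t) ^ (p-1)| ≤ KA * (2*h) := by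
      intro t ht0 hth
      have hmem1 : x + t ∈ Icc (x-h) (x+h) := by constructor <;> simp <;> linarith
      have hmem2 : x - t ∈ Icc (x-h) (x+h) := by constructor <;> simp <;> linarith
      have key := Convex.norm_image_sub_le_of_norm_hasDerivWithin_le
        (f := fun s : ℝ => s ^ (p-1)) (f' := fun s : ℝ => (p-1) * s ^ (p-2))
        (s := Icc (x-h) (x+h)) (C := KA)
        (fun s hs => by
          have hs0 : (0:ℝ) < s := by
            have := hs.1; simp at this ⊢; linarith
          have := (Real.hasDerivAt_rpow_const (x := s) (p := p - 1)
            (Or.inl hs0.ne')).hasDerivWithinAt (s := Icc (x-h) (x+h))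
          simpa [show p - 1 - 1 = p - 2 by ring] using this)
        (fun s hs => by
          have hs0 : (0:ℝ) < s := by have := hs.1; simp at this ⊢; linarith
          have hsl : x/2 ≤ s := by have := hs.1; simp at this; linarith
          have hsr : s ≤ 2*x := by have := hs.2; linarith
          have hb := pow_sub_two_bound hp hx hsl hsr
          have hsp : (0:ℝ) ≤ s ^ (p-2) := (Real.rpow_pos_of_pos hs0 _).le
          rw [Real.norm_eq_abs, abs_mul, abs_of_nonneg hsp, hKA]
          exact mul_le_mul_of_nonneg_left hb (abs_nonneg _))
        (convex_Icc _ _) hmem2 hmem1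
      have : ‖(x+t) - (x-t)‖ = 2*t := by
        rw [Real.norm_eq_abs, abs_of_nonneg (by linarith)]; ring
      rw [this] at key
      calc |(x+t) ^ (p-1) - (x-t) ^ (p-1)| ≤ KA * (2*t) := key
        _ ≤ KA * (2*h) := by nlinarith
    -- second MVT
    have mvt2 := Convex.norm_image_sub_le_of_norm_hasDerivWithin_le
      (f := fun t : ℝ => (x+t)^p + (x-t)^p)
      (f' := fun t : ℝ => 1 * p * (x+t)^(p-1) + -1 * p * (x-t)^(p-1))
      (s := Icc 0 h) (C := p * (KA * (2*h)))
      (fun t ht => by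
        have h1' : (0:ℝ) < x + t := by have := ht.1; linarith
        have h2' : (0:ℝ) < x - t := by have := ht.2; linarith
        have d1 : HasDerivAt (fun t : ℝ => (x+t)^p) (1 * p * (x+t)^(p-1)) t :=
          ((hasDerivAt_id t).const_add x).rpow_const (Or.inl h1'.ne')
        have d2 : HasDerivAt (fun t : ℝ => (x-t)^p) (-1 * p * (x-t)^(p-1)) t := by
          have := ((hasDerivAt_id t).const_sub x).rpow_const (p := p) (Or.inl h2'.ne')
          simpa using this
        exact (d1.add d2).hasDerivWithinAt)
      (fun t ht => by
        have ht0 := ht.1; have hth := ht.2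
        simp only [Real.norm_eq_abs]
        have : 1 * p * (x+t)^(p-1) + -1 * p * (x-t)^(p-1)
            = p * ((x+t)^(p-1) - (x-t)^(p-1)) := by ring
        rw [this, abs_mul, abs_of_nonneg hp.le]
        exact mul_le_mul_of_nonneg_left (derivBound t ht0 hth) hp.le)
      (convex_Icc _ _) (left_mem_Icc.2 h0.le) (right_mem_Icc.2 h0.le)
    simp only [add_zero, sub_zero, Real.norm_eq_abs] at mvt2
    rw [abs_of_pos h0] at mvt2
    have hD : |(x+h)^p + (x-h)^p - 2*x^p| ≤ 2 * p * |p-1| * (4 + (2:ℝ)^p) * x^(p-2) * (h*h) := by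
      calc |(x+h)^p + (x-h)^p - 2*x^p| = |(x+h)^p + (x-h)^p - (x^p + x^p)| := by ring_nf
        _ ≤ p * (KA * (2*h)) * h := mvt2
        _ = 2 * p * |p-1| * (4 + (2:ℝ)^p) * x^(p-2) * (h*h) := by rw [hKA]; ring
    have hhh : h * h ≤ h ^ (1+α/2) := by
      have e2 : h ^ (2:ℝ) = h * h := by
        rw [show (2:ℝ) = ((2:ℕ):ℝ) by norm_num, Real.rpow_natCast]; ring
      have := Real.rpow_le_rpow_of_exponent_ge h0 h1 (by linarith : 1 + α/2 ≤ (2:ℝ))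
      rw [e2] at this; exact this
    have hcoef : (0:ℝ) ≤ 2 * p * |p-1| * (4 + (2:ℝ)^p) * x^(p-2) := by positivity
    have step : 2 * p * |p-1| * (4 + (2:ℝ)^p) * x^(p-2) * (h*h)
        ≤ 2 * p * |p-1| * (4 + (2:ℝ)^p) * x^(p-2) * h^(1+α/2) :=
      mul_le_mul_of_nonneg_left hhh hcoef
    have hC2 : (0:ℝ) ≤ 16 * ((3:ℝ)^p + 3*(2:ℝ)^p) * (x^(p-2) * h^(1+α/2)) := by positivity
    calc |(x+h)^p + (x-h)^p - 2*x^p|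
        ≤ 2 * p * |p-1| * (4 + (2:ℝ)^p) * x^(p-2) * h^(1+α/2) := le_trans hD step
      _ ≤ Cst p * x^(p-2) * h^(1+α/2) := by
          unfold Cst
          have e : (2 * p * |p - 1| * (4 + (2:ℝ) ^ p) + 16 * ((3:ℝ) ^ p + 3 * (2:ℝ) ^ p)) * x^(p-2) * h^(1+α/2)
              = 2 * p * |p-1| * (4 + (2:ℝ)^p) * x^(p-2) * h^(1+α/2)
                + 16 * ((3:ℝ)^p + 3*(2:ℝ)^p) * (x^(p-2) * h^(1+α/2)) := by ring
          rw [e]; linarith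
  · -- rough regime : x < 2h ≤ 2
    have hx2 : x < 2*h := by linarith
    have hx2' : x ≤ 2 := by linarith
    have hb1 : (x+h)^p ≤ (3:ℝ)^p := Real.rpow_le_rpow (by linarith) (by linarith) hp.le
    have hb2 : (x-h)^p ≤ (2:ℝ)^p := Real.rpow_le_rpow (by linarith) (by linarith) hp.le
    have hb3 : x^p ≤ (2:ℝ)^p := Real.rpow_le_rpow (by linarith) (by linarith) hp.le
    have hn1 : (0:ℝ) ≤ (x+h)^p := Real.rpow_nonneg (by linarith) _
    have hn2 : (0:ℝ) ≤ (x-h)^p := Real.rpow_nonneg (by linarith) _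
    have hn3 : (0:ℝ) ≤ x^p := Real.rpow_nonneg (by linarith) _
    have hD : |(x+h)^p + (x-h)^p - 2*x^p| ≤ (3:ℝ)^p + 3*(2:ℝ)^p := by
      rw [abs_le]; constructor <;> nlinarith
    -- lower bound for x^(p-2) * h^(1+α/2)
    have hxq : (1/4 : ℝ) ≤ x ^ (p-2) := by
      rcases le_or_gt p 2 with hpc | hpc
      · have h1' : x ^ (p-2) ≥ (2:ℝ) ^ (p-2) :=
          Real.rpow_le_rpow_of_nonpos hx0 hx2' (by linarith)
        have h2' : (1/4:ℝ) ≤ (2:ℝ) ^ (p-2) := by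
          have hh := Real.rpow_le_rpow_of_exponent_le one_le_two (by linarith : (-2:ℝ) ≤ p - 2)
          rwa [show (2:ℝ) ^ (-2:ℝ) = 1/4 from by
            rw [show (-2:ℝ) = ((-2 : ℤ) : ℝ) by norm_num, Real.rpow_intCast]; norm_num] at hh
        linarith
      · have := Real.one_le_rpow hx (by linarith : (0:ℝ) ≤ p - 2)
        linarith
    have hhq : (1/4 : ℝ) ≤ h ^ (1+α/2) := by
      have hh2 : (1/2:ℝ) ≤ h := by linarith
      have e2 : h ^ (2:ℝ) = h * h := by
        rw [show (2:ℝ) = ((2:ℕ):ℝ) by norm_num, Real.rpow_natCast]; ring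
      have l1 : h * h ≤ h ^ (1+α/2) := by
        have := Real.rpow_le_rpow_of_exponent_ge h0 h1 (by linarith : 1 + α/2 ≤ (2:ℝ))
        rw [e2] at this; exact this
      nlinarith
    have h16 : (1/16 : ℝ) ≤ x^(p-2) * h^(1+α/2) := by nlinarith
    have hDD : |(x+h)^p + (x-h)^p - 2*x^p| ≤ 16 * ((3:ℝ)^p + 3*(2:ℝ)^p) * (x^(p-2) * h^(1+α/2)) := by
      have hq : (0:ℝ) ≤ (3:ℝ)^p + 3*(2:ℝ)^p := by positivity
      calc |(x+h)^p + (x-h)^p - 2*x^p| ≤ (3:ℝ)^p + 3*(2:ℝ)^p := hD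
        _ = 16 * ((3:ℝ)^p + 3*(2:ℝ)^p) * (1/16) := by ring
        _ ≤ 16 * ((3:ℝ)^p + 3*(2:ℝ)^p) * (x^(p-2) * h^(1+α/2)) := by nlinarith
    have hextra : (0:ℝ) ≤ 2 * p * |p-1| * (4 + (2:ℝ)^p) * (x^(p-2) * h^(1+α/2)) := by positivity
    calc |(x+h)^p + (x-h)^p - 2*x^p|
        ≤ 16 * ((3:ℝ)^p + 3*(2:ℝ)^p) * (x^(p-2) * h^(1+α/2)) := hDD
      _ ≤ Cst p * x^(p-2) * h^(1+α/2) := by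
          unfold Cst
          have e : (2 * p * |p - 1| * (4 + (2:ℝ) ^ p) + 16 * ((3:ℝ) ^ p + 3 * (2:ℝ) ^ p)) * x^(p-2) * h^(1+α/2)
              = 2 * p * |p-1| * (4 + (2:ℝ)^p) * (x^(p-2) * h^(1+α/2))
                + 16 * ((3:ℝ)^p + 3*(2:ℝ)^p) * (x^(p-2) * h^(1+α/2)) := by ring
          rw [e]; linarith

lemma frakA_pos {α : ℝ} (hα1 : 0 < α) (hα2 : α < 2) : 0 < frakA 1 α := by
  unfold frakA
  apply div_pos
  · apply mul_pos
    apply mul_pos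
    apply mul_pos hα1 (Real.rpow_pos_of_pos two_pos _)
    exact Real.rpow_pos_of_pos Real.pi_pos _
    exact Real.Gamma_pos_of_pos (by push_cast; linarith)
  · exact Real.Gamma_pos_of_pos (by linarith)

noncomputable def Fker (α p x : ℝ) : ℝ → ℝ :=
  fun h => ((x+h)^p + (x-h)^p - 2*x^p) * frakA 1 α * h ^ (-(1+α))

lemma Fker_contOn {α p x : ℝ} (hp : 0 < p) (hx : 1 ≤ x) :
    ContinuousOn (Fker α p x) (Ioc 0 1) := by
  intro h hh
  apply ContinuousAt.continuousWithinAt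
  have h0 : (0:ℝ) < h := hh.1
  have c1 : ContinuousAt (fun h : ℝ => (x+h)^p) h :=
    (Real.continuousAt_rpow_const _ p (Or.inr hp.le)).comp
      (continuous_const.add continuous_id).continuousAt
  have c2 : ContinuousAt (fun h : ℝ => (x-h)^p) h :=
    (Real.continuousAt_rpow_const _ p (Or.inr hp.le)).comp
      (continuous_const.sub continuous_id).continuousAt
  have c3 : ContinuousAt (fun h : ℝ => h ^ (-(1+α))) h :=
    Real.continuousAt_rpow_const _ _ (Or.inl h0.ne')
  exact (((c1.add c2).sub continuousAt_const).mul continuousAt_const).mul c3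

lemma Fker_bound {α p x : ℝ} (hp : 0 < p) (hα1 : 0 < α) (hα2 : α < 2) (hx : 1 ≤ x)
    {h : ℝ} (hh : h ∈ Ioc (0:ℝ) 1) :
    ‖Fker α p x h‖ ≤ (frakA 1 α * Cst p * x ^ (p-2)) * h ^ (-(α/2)) := by
  obtain ⟨h0, h1⟩ := hh
  have hA := frakA_pos hα1 hα2
  have hrp : (0:ℝ) < h ^ (-(1+α)) := Real.rpow_pos_of_pos h0 _
  unfold Fker
  rw [Real.norm_eq_abs, abs_mul, abs_mul, abs_of_pos hA, abs_of_pos hrp]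
  have key := Dbound hp hα1 hα2 hx h0 h1
  calc |(x+h)^p + (x-h)^p - 2*x^p| * frakA 1 α * h ^ (-(1+α))
      ≤ Cst p * x ^ (p-2) * h ^ (1+α/2) * frakA 1 α * h ^ (-(1+α)) := by
        have := mul_le_mul_of_nonneg_right (mul_le_mul_of_nonneg_right key hA.le) hrp.le
        linarith
    _ = (frakA 1 α * Cst p * x ^ (p-2)) * (h ^ (1+α/2) * h ^ (-(1+α))) := by ring
    _ = (frakA 1 α * Cst p * x ^ (p-2)) * h ^ (-(α/2)) := by
        rw [← Real.rpow_add h0]; ring_nf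

lemma Fker_integrableOn {α p x : ℝ} (hp : 0 < p) (hα1 : 0 < α) (hα2 : α < 2) (hx : 1 ≤ x) :
    IntegrableOn (Fker α p x) (Ioc 0 1) := by
  have hmaj : IntegrableOn (fun h : ℝ => (frakA 1 α * Cst p * x ^ (p-2)) * h ^ (-(α/2))) (Ioc 0 1) := by
    have : IntervalIntegrable (fun h : ℝ => h ^ (-(α/2))) volume 0 1 :=
      intervalIntegral.intervalIntegrable_rpow' (by linarith)
    rw [intervalIntegrable_iff_integrableOn_Ioc_of_le zero_le_one] at this
    exact this.const_mul _
  apply Integrable.mono' hmaj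
  · exact ((Fker_contOn hp hx).aestronglyMeasurable measurableSet_Ioc)
  · filter_upwards [ae_restrict_mem measurableSet_Ioc] with h hh
    exact Fker_bound hp hα1 hα2 hx hh

lemma Fker_tendsto {α p x : ℝ} (hp : 0 < p) (hα1 : 0 < α) (hα2 : α < 2) (hx : 1 ≤ x) :
    Tendsto (fun ε : ℝ => ∫ h in ε..1, Fker α p x h) (nhdsWithin 0 (Set.Ioi 0))
      (nhds (∫ h in (0:ℝ)..1, Fker α p x h)) := by
  have hint : IntegrableOn (Fker α p x) (uIcc 0 1) := by
    rw [uIcc_of_le zero_le_one, integrableOn_Icc_iff_integrableOn_Ioc]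
    exact Fker_integrableOn hp hα1 hα2 hx
  have cont := intervalIntegral.continuousOn_primitive_interval_left hint
  have h0mem : (0:ℝ) ∈ uIcc (0:ℝ) 1 := left_mem_uIcc
  have := (cont 0 h0mem).tendsto
  apply this.mono_left
  apply nhdsWithin_le_of_mem
  apply mem_of_superset (Ioo_mem_nhdsGT_of_mem (by constructor <;> norm_num : (0:ℝ) ∈ Ico (0:ℝ) 1))
  rw [uIcc_of_le zero_le_one]
  exact Ioo_subset_Icc_self

lemma Fker_intbound {α p x : ℝ} (hp : 0 < p) (hα1 : 0 < α) (hα2 : α < 2) (hx : 1 ≤ x) :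
    |∫ h in (0:ℝ)..1, Fker α p x h| ≤ (frakA 1 α * Cst p * (2/(2-α))) * x ^ (p-2) := by
  set K := frakA 1 α * Cst p * x ^ (p-2) with hK
  have hmaj : IntervalIntegrable (fun h : ℝ => K * h ^ (-(α/2))) volume 0 1 :=
    (intervalIntegral.intervalIntegrable_rpow' (by linarith)).const_mul K
  have hbd : ∀ᵐ t ∂(volume.restrict (Set.uIoc (0:ℝ) 1)), ‖Fker α p x t‖ ≤ K * t ^ (-(α/2)) := by
    rw [uIoc_of_le zero_le_one]
    filter_upwards [ae_restrict_mem measurableSet_Ioc] with t ht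
    exact Fker_bound hp hα1 hα2 hx ht
  have key := intervalIntegral.norm_integral_le_abs_of_norm_le hbd hmaj
  rw [Real.norm_eq_abs] at key
  have hval : ∫ t in (0:ℝ)..1, K * t ^ (-(α/2)) = K * (2/(2-α)) := by
    rw [intervalIntegral.integral_const_mul, integral_rpow (Or.inl (by linarith))]
    rw [Real.one_rpow, Real.zero_rpow (by linarith : -(α/2) + 1 ≠ 0)]
    field_simp
    ring
  rw [hval] at key
  have hKpos : 0 < K := by
    rw [hK]
    exact mul_pos (mul_pos (frakA_pos hα1 hα2) (Cst_pos hp)) (Real.rpow_pos_of_pos (by linarith) _)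
  have habs : |K * (2/(2-α))| = K * (2/(2-α)) := by
    rw [abs_of_pos]; exact mul_pos hKpos (div_pos (by norm_num) (by linarith))
  rw [habs, hK] at key
  calc |∫ h in (0:ℝ)..1, Fker α p x h| ≤ frakA 1 α * Cst p * x ^ (p-2) * (2/(2-α)) := key
    _ = (frakA 1 α * Cst p * (2/(2-α))) * x ^ (p-2) := by ring

lemma real_step {α p x : ℝ} (hp : 0 < p) (hα1 : 0 < α) (hα2 : α < 2) (hx : 1 ≤ x)
    {ε : ℝ} (hε0 : 0 < ε) (hε1 : ε < 1) :
    ∫ t in {t : ℝ | ε < |t - x| ∧ |t - x| < 1},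
        (max t 0 ^ p - max x 0 ^ p) * frakA 1 α * |x - t| ^ (-(1+α))
      = ∫ h in ε..1, Fker α p x h := by
  set A := frakA 1 α with hA
  set realG : ℝ → ℝ := fun t => (max t 0 ^ p - max x 0 ^ p) * A * |x - t| ^ (-(1+α)) with hrealG
  set GG : ℝ → ℝ := fun h => realG (x + h) with hGG
  -- continuity of GG away from 0
  have contG : ContinuousOn GG {h : ℝ | h ≠ 0} := by
    intro h hh
    apply ContinuousAt.continuousWithinAt
    have c1 : ContinuousAt (fun h : ℝ => max (x+h) 0 ^ p) h :=
      (Real.continuousAt_rpow_const _ p (Or.inr hp.le)).comp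
        (((continuous_const.add continuous_id).max continuous_const).continuousAt)
    have cb : ContinuousAt (fun h : ℝ => |x - (x+h)|) h :=
      ((continuous_const.sub (continuous_const.add continuous_id)).abs).continuousAt
    have hb : |x - (x + h)| ≠ 0 := by
      simp only [Set.mem_setOf_eq] at hh
      rw [show x - (x+h) = -h by ring, abs_neg, abs_ne_zero]
      exact hh
    have c3 : ContinuousAt (fun h : ℝ => |x - (x+h)| ^ (-(1+α))) h :=
      cb.rpow_const (Or.inl hb)
    exact ((c1.sub continuousAt_const).mul continuousAt_const).mul c3
  have intPos : IntegrableOn GG (Ioo ε 1) := by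
    apply IntegrableOn.mono_set _ Ioo_subset_Icc_self
    apply ContinuousOn.integrableOn_Icc
    exact contG.mono (fun t ht => by
      simp only [mem_Icc] at ht; simp only [Set.mem_setOf_eq]; intro h'; rw [h'] at ht; linarith [ht.1])
  have intNeg : IntegrableOn GG (Ioo (-1) (-ε)) := by
    apply IntegrableOn.mono_set _ Ioo_subset_Icc_self
    apply ContinuousOn.integrableOn_Icc
    exact contG.mono (fun t ht => by
      simp only [mem_Icc] at ht; simp only [Set.mem_setOf_eq]; intro h'; rw [h'] at ht; linarith [ht.2])
  have intNeg' : IntegrableOn (fun h => GG (-h)) (Ioo ε 1) := by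
    apply IntegrableOn.mono_set _ Ioo_subset_Icc_self
    apply ContinuousOn.integrableOn_Icc
    have : ContinuousOn (GG ∘ (fun h : ℝ => -h)) (Icc ε 1) := by
      apply ContinuousOn.comp contG continuous_neg.continuousOn
      intro t ht
      simp only [mem_Icc] at ht
      simp only [Set.mem_setOf_eq]
      intro h'
      have : t = 0 := by linarith [neg_eq_zero.mp h']
      linarith [ht.1]
    exact this
  -- translation
  have e1 : (fun h : ℝ => x + h) ⁻¹' {t : ℝ | ε < |t - x| ∧ |t - x| < 1}
      = {h : ℝ | ε < |h| ∧ |h| < 1} := by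
    ext h; simp [add_sub_cancel_left]
  have tr := (measurePreserving_add_left volume x).setIntegral_preimage_emb
    (measurableEmbedding_addLeft x) realG {t : ℝ | ε < |t - x| ∧ |t - x| < 1}
  rw [e1] at tr
  rw [← tr]
  -- split
  have e2 : {h : ℝ | ε < |h| ∧ |h| < 1} = Ioo (-1) (-ε) ∪ Ioo ε 1 := by
    ext h
    simp only [Set.mem_setOf_eq, lt_abs, abs_lt, Set.mem_union, mem_Ioo]
    constructor
    · rintro ⟨h1 | h1, h2, h3⟩
      · right; exact ⟨h1, h3⟩
      · left; exact ⟨h2, by linarith⟩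
    · rintro (⟨h1, h2⟩ | ⟨h1, h2⟩)
      · exact ⟨Or.inr (by linarith), h1, by linarith⟩
      · exact ⟨Or.inl h1, by linarith, h2⟩
  have e3 : ∀ h : ℝ, realG (x + h) = GG h := fun h => rfl
  simp only [e3, e2]
  rw [setIntegral_union (by
      rw [Set.disjoint_left]
      intro a ha hb
      simp only [mem_Ioo] at ha hb
      linarith [ha.2, hb.1]) measurableSet_Ioo intNeg intPos]
  -- negation on the left piece
  have e4 : (Neg.neg : ℝ → ℝ) ⁻¹' Ioo (-1) (-ε) = Ioo ε 1 := by
    ext h; simp only [Set.mem_preimage, mem_Ioo]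
    constructor <;> intro hh <;> constructor <;> linarith [hh.1, hh.2]
  have tr2 := (Measure.measurePreserving_neg (volume : Measure ℝ)).setIntegral_preimage_emb
    (MeasurableEquiv.neg ℝ).measurableEmbedding GG (Ioo (-1) (-ε))
  rw [e4] at tr2
  rw [← tr2, ← integral_add intNeg' intPos]
  -- pointwise identification
  rw [show (∫ h in ε..1, Fker α p x h) = ∫ h in Ioo ε 1, Fker α p x h by
    rw [intervalIntegral.integral_of_le hε1.le, integral_Ioc_eq_integral_Ioo]]
  apply setIntegral_congr_fun measurableSet_Ioo
  intro h hh
  simp only [mem_Ioo] at hh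
  obtain ⟨hh1, hh2⟩ := hh
  have h0 : 0 < h := lt_trans hε0 hh1
  have hGGh : GG h = ((x+h)^p - x^p) * A * h ^ (-(1+α)) := by
    simp only [hGG, hrealG]
    rw [max_eq_left (by linarith : (0:ℝ) ≤ x + h), max_eq_left (by linarith : (0:ℝ) ≤ x),
      show x - (x + h) = -h by ring, abs_neg, abs_of_pos h0]
  have hGGnh : GG (-h) = ((x-h)^p - x^p) * A * h ^ (-(1+α)) := by
    simp only [hGG, hrealG]
    rw [show x + -h = x - h by ring, max_eq_left (by linarith : (0:ℝ) ≤ x - h),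
      max_eq_left (by linarith : (0:ℝ) ≤ x), show x - (x - h) = h by ring, abs_of_pos h0]
  show GG (-h) + GG h = Fker α p x h
  rw [hGGnh, hGGh]
  unfold Fker
  rw [← hA]
  ring

noncomputable def ψ : EuclideanSpace ℝ (Fin 1) ≃ᵐ ℝ :=
  (MeasurableEquiv.toLp 2 (Fin 1 → ℝ)).symm.trans (MeasurableEquiv.funUnique (Fin 1) ℝ)

lemma ψmp : MeasurePreserving ψ.symm volume volume :=
  ((EuclideanSpace.volume_preserving_symm_measurableEquiv_toLp (Fin 1)).trans
    (volume_preserving_funUnique (Fin 1) ℝ)).symm ψ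

lemma ψsymm (t : ℝ) : ψ.symm t = EuclideanSpace.single 0 t := by
  ext i
  fin_cases i
  simp [ψ, MeasurableEquiv.funUnique, MeasurableEquiv.trans, MeasurableEquiv.symm,
    MeasurableEquiv.piUnique, Equiv.piUnique]


lemma single_sub_single (a b : ℝ) :
    (EuclideanSpace.single (0 : Fin 1) a) - EuclideanSpace.single 0 b
      = EuclideanSpace.single 0 (a - b) := by
  ext i
  fin_cases i
  simp [EuclideanSpace.single_apply]

lemma norm_single_abs (a : ℝ) : ‖EuclideanSpace.single (0 : Fin 1) a‖ = |a| := by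
  rw [EuclideanSpace.norm_single, Real.norm_eq_abs]

lemma wp_single (p t : ℝ) : wp 1 one_pos p (EuclideanSpace.single 0 t) = max t 0 ^ p := by
  unfold wp
  norm_num [EuclideanSpace.single_apply]

lemma euclid_step (α p x ε : ℝ) :
    (∫ y in {y : EuclideanSpace ℝ (Fin 1) |
        ε < ‖y - EuclideanSpace.single 0 x‖ ∧ ‖y - EuclideanSpace.single 0 x‖ < 1},
      (wp 1 one_pos p y - wp 1 one_pos p (EuclideanSpace.single 0 x)) * frakA 1 α *
        ‖EuclideanSpace.single 0 x - y‖ ^ (-((1 : ℕ) + α)))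
    = ∫ t in {t : ℝ | ε < |t - x| ∧ |t - x| < 1},
        (max t 0 ^ p - max x 0 ^ p) * frakA 1 α * |x - t| ^ (-(1+α)) := by
  have tr := ψmp.setIntegral_preimage_emb ψ.symm.measurableEmbedding
    (fun y => (wp 1 one_pos p y - wp 1 one_pos p (EuclideanSpace.single 0 x)) * frakA 1 α *
        ‖EuclideanSpace.single 0 x - y‖ ^ (-((1 : ℕ) + α)))
    {y : EuclideanSpace ℝ (Fin 1) |
        ε < ‖y - EuclideanSpace.single 0 x‖ ∧ ‖y - EuclideanSpace.single 0 x‖ < 1}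
  rw [← tr]
  have hpre : ψ.symm ⁻¹' {y : EuclideanSpace ℝ (Fin 1) |
      ε < ‖y - EuclideanSpace.single 0 x‖ ∧ ‖y - EuclideanSpace.single 0 x‖ < 1}
      = {t : ℝ | ε < |t - x| ∧ |t - x| < 1} := by
    ext t
    simp only [Set.mem_preimage, Set.mem_setOf_eq, ψsymm, single_sub_single, norm_single_abs]
  rw [hpre]
  apply setIntegral_congr_fun
  · have : MeasurableSet {t : ℝ | ε < |t - x| ∧ |t - x| < 1} := by
      apply MeasurableSet.inter
      · exact measurableSet_lt measurable_const (measurable_id.sub measurable_const).abs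
      · exact measurableSet_lt (measurable_id.sub measurable_const).abs measurable_const
    exact this
  · intro t _
    show (wp 1 one_pos p (ψ.symm t) - wp 1 one_pos p (EuclideanSpace.single 0 x)) * frakA 1 α *
        ‖EuclideanSpace.single 0 x - ψ.symm t‖ ^ (-(((1:ℕ):ℝ) + α))
      = (max t 0 ^ p - max x 0 ^ p) * frakA 1 α * |x - t| ^ (-(1+α))
    rw [ψsymm t, wp_single, wp_single, single_sub_single, norm_single_abs]
    norm_num

theorem statement15 (α p : ℝ) (hα1 : 0 < α) (hα2 : α < 2) (hp : 0 < p) :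
    ∃ c : ℝ, 0 < c ∧
      ∀ x : ℝ, 1 ≤ x →
        ∃ L : ℝ, truncFracLapPV 1 α 1 (wp 1 one_pos p) (EuclideanSpace.single 0 x) L ∧
          |L| ≤ c * x ^ (p - 2) := by
  refine ⟨frakA 1 α * Cst p * (2/(2-α)), ?_, ?_⟩
  · exact mul_pos (mul_pos (frakA_pos hα1 hα2) (Cst_pos hp))
      (div_pos (by norm_num) (by linarith))
  intro x hx
  refine ⟨∫ h in (0:ℝ)..1, Fker α p x h, ?_, Fker_intbound hp hα1 hα2 hx⟩
  unfold truncFracLapPV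
  apply Tendsto.congr' _ (Fker_tendsto hp hα1 hα2 hx)
  filter_upwards [Ioo_mem_nhdsGT_of_mem
    (by constructor <;> norm_num : (0:ℝ) ∈ Set.Ico (0:ℝ) 1)] with ε hε
  obtain ⟨hε0, hε1⟩ := hε
  rw [← real_step hp hα1 hα2 hx hε0 hε1, ← euclid_step α p x ε]
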